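/- In any Bakers and Millers diversity game with |R| = |B| = n, the partition into n mixed pairs (each consisting of one red and one blue agent) is both Nash stable and core stable. -/
import Mathlib


open Finset

/-- The red ratio of a finite coalition. -/
def redRatio {α : Type*} (red : α → Prop) [DecidablePred red] (S : Finset α) : ℚ :=
  ((S.filter red).card : ℚ) / (S.card : ℚ)

/-- In any Bakers and Millers diversity game with `|R| = |B| = n`
(each red agent prefers smaller red ratios, each blue agent prefers larger ones),
any partition into `n` mixed pairs is both Nash stable and core stable. -/
theorem stmt5 {α : Type*} [Fintype α] [DecidableEq α] (red : α → Prop) [DecidablePred red]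
    (pref : α → ℚ → ℚ → Prop)
    (hpref : ∀ i (θ θ' : ℚ), pref i θ θ' ↔ (if red i then θ < θ' else θ' < θ))
    (n : ℕ)
    (hR : (univ.filter red).card = n)
    (hB : (univ.filter fun a => ¬ red a).card = n)
    (π : Finset (Finset α))
    (hne : ∀ S ∈ π, S.Nonempty)
    (hpart : ∀ a : α, ∃! S, S ∈ π ∧ a ∈ S)
    (hpairs : ∀ S ∈ π, S.card = 2 ∧ (S.filter red).card = 1) :
    -- Nash stability
    (¬ ∃ (i : α) (S : Finset α), (S ∈ π ∨ S = ∅) ∧ i ∉ S ∧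
        ∀ T ∈ π, i ∈ T → pref i (redRatio red (insert i S)) (redRatio red T)) ∧
    -- core stability
    (¬ ∃ S : Finset α, S.Nonempty ∧
        ∀ i ∈ S, ∀ T ∈ π, i ∈ T → pref i (redRatio red S) (redRatio red T)) := by
  have hT : ∀ T ∈ π, redRatio red T = 1/2 := by
    intro T hTπ
    obtain ⟨h2, h1⟩ := hpairs T hTπ
    simp [redRatio, h1, h2]
  constructor
  · rintro ⟨i, S, hS, hiS, hdev⟩
    obtain ⟨T, ⟨hTπ, hiT⟩, -⟩ := hpart i
    have h := hdev T hTπ hiT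
    rw [hpref, hT T hTπ] at h
    by_cases hi : red i
    · rw [if_pos hi] at h
      have : (1:ℚ)/2 ≤ redRatio red (insert i S) := by
        rcases hS with hSπ | rfl
        · obtain ⟨h2, h1⟩ := hpairs S hSπ
          have hc : (insert i S).card = 3 := by rw [card_insert_of_notMem hiS, h2]
          have hf : ((insert i S).filter red).card = 2 := by
            rw [filter_insert, if_pos hi, card_insert_of_notMem (fun hm => hiS (mem_of_mem_filter i hm)), h1]
          rw [redRatio, hc, hf]; norm_num
        · simp [redRatio, filter_singleton, hi]
          norm_num
      linarith
    · rw [if_neg hi] at h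
      have : redRatio red (insert i S) ≤ (1:ℚ)/2 := by
        rcases hS with hSπ | rfl
        · obtain ⟨h2, h1⟩ := hpairs S hSπ
          have hc : (insert i S).card = 3 := by rw [card_insert_of_notMem hiS, h2]
          have hf : ((insert i S).filter red).card = 1 := by
            rw [filter_insert, if_neg hi, h1]
          rw [redRatio, hc, hf]; norm_num
        · simp [redRatio, filter_singleton, hi]
      linarith
  · rintro ⟨S, ⟨i, hiS⟩, hdev⟩
    have key : ∀ j ∈ S, if red j then redRatio red S < 1/2 else 1/2 < redRatio red S := by
      intro j hjS
      obtain ⟨T, ⟨hTπ, hjT⟩, -⟩ := hpart j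
      have h := hdev j hjS T hTπ hjT
      rw [hpref, hT T hTπ] at h
      exact h
    have hSc : (0:ℚ) < (S.card : ℚ) := by
      have := card_pos.mpr ⟨i, hiS⟩
      exact_mod_cast this
    by_cases hi : red i
    · have hlt := key i hiS
      rw [if_pos hi] at hlt
      -- there is a non-red agent in S
      have hne' : ∃ j ∈ S, ¬ red j := by
        by_contra hall
        push_neg at hall
        have : S.filter red = S := filter_eq_self.mpr hall
        rw [redRatio, this] at hlt
        rw [div_self (ne_of_gt hSc)] at hlt
        norm_num at hlt
      obtain ⟨j, hjS, hj⟩ := hne'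
      have hgt := key j hjS
      rw [if_neg hj] at hgt
      linarith
    · have hgt := key i hiS
      rw [if_neg hi] at hgt
      have hne' : ∃ j ∈ S, red j := by
        by_contra hall
        push_neg at hall
        have : S.filter red = ∅ := filter_eq_empty_iff.mpr hall
        rw [redRatio, this] at hgt
        norm_num at hgt
      obtain ⟨j, hjS, hj⟩ := hne'
      have hlt := key j hjS
      rw [if_pos hj] at hlt
      linarith
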